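/- Assume 0 ≤ p₁ ≤ 1, 0 ≤ p₂ ≤ 1, and |p₂ - p₁| < 1. Then the asymptotic expected capture fraction equals p^⊤ η*: the Cesàro averages (1/n) * ∑_{i=0}^{n-1} (p₁ * (η i 0) + p₂ * (η i 1)) converge, as n → ∞, to p₁ * η* 0 + p₂ * η* 1 = p₁ / (1 + p₁ - p₂). (Multiplying by 100 gives the paper's asymptotic capture percentage percentage(∞) = p^⊤ η* × 100.) -/

import Mathlib

open Matrix Filter

/-- Transition matrix of the two-state Markov chain:
row 0 = (1 - p₁, 1 - p₂), row 1 = (p₁, p₂). -/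
def M (p₁ p₂ : ℝ) : Matrix (Fin 2) (Fin 2) ℝ := !![1 - p₁, 1 - p₂; p₁, p₂]

/-- Initial distribution: defender at the target center. -/
def e₁ : Fin 2 → ℝ := ![1, 0]

/-- Distribution of the chain after `n` games when started in `S₁`. -/
def η (p₁ p₂ : ℝ) (n : ℕ) : Fin 2 → ℝ := (M p₁ p₂ ^ n) *ᵥ e₁

/-- The candidate stationary distribution. -/
noncomputable def ηstar (p₁ p₂ : ℝ) : Fin 2 → ℝ := ![(1 - p₂) / (1 + p₁ - p₂), p₁ / (1 + p₁ - p₂)]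

lemma eta_closed (p₁ p₂ : ℝ) (hd : 1 + p₁ - p₂ ≠ 0) (n : ℕ) :
    η p₁ p₂ n 0 = (1 - p₂ + (p₂ - p₁) ^ n * p₁) / (1 + p₁ - p₂) ∧
    η p₁ p₂ n 1 = (p₁ - (p₂ - p₁) ^ n * p₁) / (1 + p₁ - p₂) := by
  induction n with
  | zero =>
    constructor <;> simp [η, e₁] <;> field_simp <;> ring
  | succ n ih =>
    obtain ⟨ih0, ih1⟩ := ih
    have hstep : η p₁ p₂ (n + 1) = M p₁ p₂ *ᵥ η p₁ p₂ n := by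
      simp only [η, pow_succ', Matrix.mulVec_mulVec]
    constructor <;>
    · rw [hstep]
      simp [M, Matrix.mulVec, dotProduct, Fin.sum_univ_two, ih0, ih1]
      field_simp
      ring

theorem asymptotic_capture_fraction (p₁ p₂ : ℝ) (h₁ : 0 ≤ p₁) (h₁' : p₁ ≤ 1)
    (h₂ : 0 ≤ p₂) (h₂' : p₂ ≤ 1) (h : |p₂ - p₁| < 1) :
    p₁ * ηstar p₁ p₂ 0 + p₂ * ηstar p₁ p₂ 1 = p₁ / (1 + p₁ - p₂) ∧
      Tendsto
        (fun n : ℕ =>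
          (1 / (n : ℝ)) * ∑ i ∈ Finset.range n, (p₁ * η p₁ p₂ i 0 + p₂ * η p₁ p₂ i 1))
        atTop (nhds (p₁ / (1 + p₁ - p₂))) := by
  have hd : 0 < 1 + p₁ - p₂ := by
    have := abs_lt.mp h
    linarith [this.2]
  have hd' : (1 + p₁ - p₂) ≠ 0 := ne_of_gt hd
  set D := 1 + p₁ - p₂ with hD
  set L := p₁ / D with hL
  set K := p₁ * (p₁ - p₂) / D with hK
  set r := p₂ - p₁ with hr
  have hterm : ∀ i : ℕ, p₁ * η p₁ p₂ i 0 + p₂ * η p₁ p₂ i 1 = L + K * r ^ i := by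
    intro i
    obtain ⟨h0, h1⟩ := eta_closed p₁ p₂ hd' i
    rw [h0, h1, hL, hK, ← hD, ← hr]
    field_simp
    ring
  constructor
  · have hd3 : (1 : ℝ) + p₁ - p₂ ≠ 0 := hd'
    simp only [ηstar, Matrix.cons_val_zero, Matrix.cons_val_one, Matrix.head_cons]
    show _ = p₁ / (1 + p₁ - p₂)
    field_simp
    ring
  · have habs : |r| < 1 := h
    have hgeo : Tendsto (fun n : ℕ => ∑ i ∈ Finset.range n, r ^ i) atTop
        (nhds (1 / (1 - r))) := by
      have := hasSum_geometric_of_abs_lt_one habs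
      simpa [one_div] using this.tendsto_sum_nat
    have hinv : Tendsto (fun n : ℕ => 1 / (n : ℝ)) atTop (nhds 0) :=
      tendsto_one_div_atTop_nhds_zero_nat
    have h2 : Tendsto (fun n : ℕ => (1 / (n : ℝ)) * (K * ∑ i ∈ Finset.range n, r ^ i))
        atTop (nhds 0) := by
      have := hinv.mul ((hgeo.const_mul K))
      simpa using this
    have heq : ∀ᶠ n : ℕ in atTop,
        (1 / (n : ℝ)) * ∑ i ∈ Finset.range n, (p₁ * η p₁ p₂ i 0 + p₂ * η p₁ p₂ i 1)
          = L + (1 / (n : ℝ)) * (K * ∑ i ∈ Finset.range n, r ^ i) := by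
      filter_upwards [eventually_ge_atTop 1] with n hn
      have hn' : (n : ℝ) ≠ 0 := by positivity
      rw [Finset.sum_congr rfl (fun i _ => hterm i)]
      rw [Finset.sum_add_distrib, Finset.sum_const, Finset.card_range,
        ← Finset.mul_sum]
      field_simp
      ring
    have : Tendsto (fun n : ℕ => L + (1 / (n : ℝ)) * (K * ∑ i ∈ Finset.range n, r ^ i))
        atTop (nhds (L + 0)) := (tendsto_const_nhds).add h2
    rw [add_zero] at this
    exact this.congr' (Filter.EventuallyEq.symm heq)
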